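/- arXiv:1511.07922 — 2 statements merged into one kernel-verified Lean document; each statement's English description precedes it below -/
import Mathlib

section
/- For L ∈ R[x][∂] of order r > 0 and k ≥ r: the left ideal R[x][∂]·M_k equals R[x][∂]·M_{k+1} if and only if σ(I_k) = I_{k+1}. -/
open Polynomial

noncomputable section

/-- `Q_R(x)`, the field of rational functions over the fraction field `Q_R` of `R`,
realized as the fraction field of `R[x]`. -/
abbrev QX (R : Type) [CommRing R] [IsDomain R] := FractionRing (Polynomial R)

/-- Data of an Ore algebra `R[x][∂; σ, δ] ⊆ Q_R(x)[∂; σ, δ]`.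
The ring `A` plays the role of `Q_R(x)[∂]`; `ι` embeds the coefficient field,
`D` is the Ore variable `∂`, subject to the commutation rule `∂·p = σ(p)·∂ + δ(p)`,
and every element of `A` has a unique finite coefficient expansion `Σ ι(cᵢ)·∂^i`. -/
structure OreAlg (R : Type) [CommRing R] [IsDomain R] (A : Type) [Ring A] where
  σ : Polynomial R ≃+* Polynomial R
  σ_fix : ∀ r : R, σ (C r) = C r
  δ : Polynomial R → Polynomial R
  δ_add : ∀ f g, δ (f + g) = δ f + δ g
  δ_linear : ∀ (r : R) (f), δ (C r * f) = C r * δ f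
  ι : QX R →+* A
  ι_inj : Function.Injective ι
  D : A
  comm_rule : ∀ p : Polynomial R,
    D * ι (algebraMap (Polynomial R) (QX R) p)
      = ι (algebraMap (Polynomial R) (QX R) (σ p)) * D
        + ι (algebraMap (Polynomial R) (QX R) (δ p))
  δ_leibniz : ∀ f g, δ (f * g) = σ f * δ g + δ f * g
  coeff : A → ℕ → QX R
  coeff_inj : ∀ P Q : A, (∀ i, coeff P i = coeff Q i) → P = Q
  coeff_add : ∀ P Q i, coeff (P + Q) i = coeff P i + coeff Q i
  coeff_smul : ∀ (f : QX R) (P : A) (i), coeff (ι f * P) i = f * coeff P i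
  coeff_bdd : ∀ P : A, ∃ N, ∀ i, N < i → coeff P i = 0
  coeff_mk : ∀ (N : ℕ) (c : ℕ → QX R), (∀ i, N < i → c i = 0) →
    ∀ j, coeff (∑ i ∈ Finset.range (N + 1), ι (c i) * D ^ i) j = c j

namespace OreAlg

variable {R : Type} [CommRing R] [IsDomain R] {A : Type} [Ring A] (O : OreAlg R A)

/-- The embedding of `R[x]` into the Ore algebra. -/
def ιp (f : Polynomial R) : A := O.ι (algebraMap (Polynomial R) (QX R) f)

/-- The `i`-th `∂`-coefficient of `P` lies in `R[x]`. -/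
def PolyCoeff (P : A) (i : ℕ) : Prop :=
  ∃ f : Polynomial R, O.coeff P i = algebraMap (Polynomial R) (QX R) f

/-- `P` belongs to the subring `R[x][∂]` of `Q_R(x)[∂]`. -/
def InB (P : A) : Prop := ∀ i, O.PolyCoeff P i

/-- The order (degree in `∂`) of an operator. -/
def ord (P : A) : ℕ := sSup {i | O.coeff P i ≠ 0}

/-- The leading coefficient (with respect to `∂`), in `Q_R(x)`. -/
def lc (P : A) : QX R := O.coeff P (O.ord P)

/-- The contraction ideal `cont(L) = Q_R(x)[∂]·L ∩ R[x][∂]`. -/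
def cont (L : A) : Set A := {P | O.InB P ∧ ∃ Q : A, P = Q * L}

/-- The `k`-th submodule `M_k(L) = {P ∈ cont(L) : deg_∂ P ≤ k}`. -/
def M (L : A) (k : ℕ) : Set A := {P | P ∈ O.cont L ∧ O.ord P ≤ k}

/-- The `k`-th coefficient ideal `I_k = {[∂^k]P : P ∈ M_k} ∪ {0}` (as a set of
polynomials; `0` arises from `P = 0`). -/
def Icoeff (L : A) (k : ℕ) : Set (Polynomial R) :=
  {f | ∃ P ∈ O.M L k, O.coeff P k = algebraMap (Polynomial R) (QX R) f}

end OreAlg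

/-- `gcd(p, w) = 1` in `R[x]`: every common divisor is a unit. -/
def Copr {R : Type} [CommRing R] (p w : Polynomial R) : Prop :=
  ∀ d : Polynomial R, d ∣ p → d ∣ w → IsUnit d

namespace OreAlg

variable {R : Type} [CommRing R] [IsDomain R] {A : Type} [Ring A] (O : OreAlg R A)

/-- `P` is a `p`-removing operator for `L` over `R[x]`, of order `k`:
`P·L ∈ R[x][∂]` and `σ^{-k}(lc_∂(P·L)) = (w/(v·p))·lc_∂(L)` with `gcd(p, w) = 1`. -/
def IsRemoving (L : A) (p : Polynomial R) (k : ℕ) (P : A) : Prop :=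
  O.ord P = k ∧ O.InB (P * L) ∧
  ∃ w v t l : Polynomial R, v ≠ 0 ∧ Copr p w ∧
    O.lc (P * L) = algebraMap (Polynomial R) (QX R) t ∧
    O.lc L = algebraMap (Polynomial R) (QX R) l ∧
    (⇑O.σ.symm)^[k] t * (v * p) = w * l

/-- `p` is removable from `L` (at some order). -/
def Removable (L : A) (p : Polynomial R) : Prop :=
  ∃ k P, O.IsRemoving L p k P

/-- Factorization data for `lc_∂(L) = c·p₁^{e₁}⋯p_m^{e_m}`, with `c ∈ R` and the
`pᵢ ∈ R[x] \ R` irreducible and pairwise coprime; `L` has order `r > 0`. -/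
def Factored (L : A) (r m : ℕ) (c : R) (p : Fin m → Polynomial R)
    (e : Fin m → ℕ) : Prop :=
  O.ord L = r ∧ 0 < r ∧ c ≠ 0 ∧
  O.lc L = algebraMap (Polynomial R) (QX R) (C c * ∏ i, p i ^ e i) ∧
  (∀ i, Irreducible (p i) ∧ 0 < (p i).natDegree) ∧
  (∀ i j, i ≠ j → Copr (p i) (p j))

/-- `T` is a desingularized operator for `L`: `T ∈ cont(L)` and
`σ^{r-k}(lc_∂(T)) = (a/(b·∏ pᵢ^{kᵢ}))·lc_∂(L)` with `a, b ∈ R`, where each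
`pᵢ^{dᵢ}` with `dᵢ > kᵢ` is non-removable from `L`. -/
def Desing (L : A) (r m : ℕ) (c : R) (p : Fin m → Polynomial R)
    (e : Fin m → ℕ) (T : A) : Prop :=
  T ∈ O.cont L ∧ r ≤ O.ord T ∧
  ∃ (a b : R) (k : Fin m → ℕ) (t l : Polynomial R),
    b ≠ 0 ∧ (∀ i, k i ≤ e i) ∧
    O.lc T = algebraMap (Polynomial R) (QX R) t ∧
    O.lc L = algebraMap (Polynomial R) (QX R) l ∧
    (⇑O.σ.symm)^[O.ord T - r] t * (C b * ∏ i, p i ^ k i) = C a * l ∧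
    (∀ i (d : ℕ), k i < d → ¬ O.Removable L (p i ^ d))

/-- The left ideal of `R[x][∂]` generated by a set `S ⊆ R[x][∂]`. -/
def LIdeal (S : Set A) : Set A :=
  {P | ∃ (n : ℕ) (co s : Fin n → A), (∀ i, O.InB (co i)) ∧ (∀ i, s i ∈ S) ∧
    P = ∑ i, co i * s i}

/-- The constant `a ∈ R` viewed inside the Ore algebra. -/
def cst (a : R) : A := O.ιp (C a)

/-- The saturation `I : a^∞ = {P ∈ R[x][∂] : aⁱ·P ∈ I for some i}`. -/
def sat (I : Set A) (a : R) : Set A :=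
  {P | O.InB P ∧ ∃ i : ℕ, O.cst a ^ i * P ∈ I}

end OreAlg

namespace OreAlg

variable {R : Type} [CommRing R] [IsDomain R] {A : Type} [Ring A] (O : OreAlg R A)

lemma alg_inj : Function.Injective (algebraMap (Polynomial R) (QX R)) :=
  IsFractionRing.injective _ _

lemma czero (i : ℕ) : O.coeff 0 i = 0 := by
  have h := O.coeff_add 0 0 i
  rw [add_zero] at h
  exact left_eq_add.mp h

lemma cneg (P : A) (i : ℕ) : O.coeff (-P) i = - O.coeff P i := by
  have h := O.coeff_add P (-P) i
  rw [add_neg_cancel, O.czero] at h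
  exact eq_neg_of_add_eq_zero_right h.symm

lemma csub (P Q : A) (i : ℕ) : O.coeff (P - Q) i = O.coeff P i - O.coeff Q i := by
  rw [sub_eq_add_neg, O.coeff_add, O.cneg, sub_eq_add_neg]

lemma csum {ι : Type} (t : Finset ι) (F : ι → A) (j : ℕ) :
    O.coeff (∑ i ∈ t, F i) j = ∑ i ∈ t, O.coeff (F i) j :=
  map_sum (⟨⟨fun P => O.coeff P j, O.czero j⟩, fun P Q => O.coeff_add P Q j⟩ : A →+ QX R) F t

lemma csingle (f : QX R) (i j : ℕ) :
    O.coeff (O.ι f * O.D ^ i) j = if i = j then f else 0 := by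
  have hc : ∀ j', i < j' → (fun j' => if i = j' then f else 0) j' = 0 := by
    intro j' h
    simp only
    rw [if_neg (by omega)]
  have hmk := O.coeff_mk i (fun j' => if i = j' then f else 0) hc j
  have hsum : (∑ i' ∈ Finset.range (i + 1), O.ι (if i = i' then f else 0) * O.D ^ i')
      = O.ι f * O.D ^ i := by
    rw [Finset.sum_eq_single i]
    · rw [if_pos rfl]
    · intro b _ hb
      rw [if_neg (fun h => hb h.symm), map_zero, zero_mul]
    · intro h
      exact absurd (Finset.self_mem_range_succ i) h
  rw [hsum] at hmk
  exact hmk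

lemma cpsingle (u : Polynomial R) (i j : ℕ) :
    O.coeff (O.ιp u * O.D ^ i) j
      = if i = j then algebraMap (Polynomial R) (QX R) u else 0 :=
  O.csingle _ i j

lemma coeff_pmul (u : Polynomial R) (P : A) (i : ℕ) :
    O.coeff (O.ιp u * P) i = algebraMap (Polynomial R) (QX R) u * O.coeff P i :=
  O.coeff_smul _ P i

open Classical in
/-- canonical polynomial coefficient -/
def pcf (P : A) (i : ℕ) : Polynomial R :=
  if h : ∃ f : Polynomial R, O.coeff P i = algebraMap (Polynomial R) (QX R) f
  then h.choose else 0

lemma pcf_spec (P : A) (hP : O.InB P) (i : ℕ) :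
    algebraMap (Polynomial R) (QX R) (O.pcf P i) = O.coeff P i := by
  unfold pcf
  split
  · next h => exact h.choose_spec.symm
  · next h => exact absurd (hP i) h

lemma pcf_eq (P : A) (hP : O.InB P) {i : ℕ} {f : Polynomial R}
    (h : O.coeff P i = algebraMap (Polynomial R) (QX R) f) : O.pcf P i = f :=
  alg_inj (by rw [O.pcf_spec P hP i, h])

lemma pcf_zero (P : A) (hP : O.InB P) {i : ℕ} (h : O.coeff P i = 0) : O.pcf P i = 0 :=
  O.pcf_eq P hP (by rw [h, map_zero])

lemma expand (P : A) (N : ℕ) (hN : ∀ i, N < i → O.coeff P i = 0) :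
    P = ∑ i ∈ Finset.range (N + 1), O.ι (O.coeff P i) * O.D ^ i :=
  O.coeff_inj _ _ fun j => (O.coeff_mk N (O.coeff P) hN j).symm

lemma expandB (P : A) (hP : O.InB P) (N : ℕ) (hN : ∀ i, N < i → O.coeff P i = 0) :
    P = ∑ i ∈ Finset.range (N + 1), O.ιp (O.pcf P i) * O.D ^ i := by
  conv_lhs => rw [O.expand P N hN]
  refine Finset.sum_congr rfl fun i _ => ?_
  simp only [ιp, O.pcf_spec P hP]

lemma ord_le (P : A) (n : ℕ) (h : ∀ j, n < j → O.coeff P j = 0) : O.ord P ≤ n := by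
  unfold ord
  by_cases hs : {i | O.coeff P i ≠ 0}.Nonempty
  · exact csSup_le hs fun a ha => le_of_not_gt fun hlt => ha (h a hlt)
  · rw [Set.not_nonempty_iff_eq_empty.mp hs, csSup_empty]
    exact bot_le

lemma coeff_ord_lt (P : A) {n j : ℕ} (h : O.ord P ≤ n) (hj : n < j) : O.coeff P j = 0 := by
  by_contra hne
  have hb : BddAbove {i | O.coeff P i ≠ 0} := by
    obtain ⟨N, hN⟩ := O.coeff_bdd P
    exact ⟨N, fun i hi => le_of_not_gt fun h' => hi (hN i h')⟩
  have : j ≤ O.ord P := le_csSup hb hne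
  omega

lemma δ0 : O.δ 0 = 0 := by
  have h := O.δ_add 0 0
  rw [add_zero] at h
  exact left_eq_add.mp h

lemma ιp_neg (u : Polynomial R) : O.ιp (-u) = - O.ιp u := by
  unfold ιp
  rw [map_neg, map_neg]

lemma ιp_one : O.ιp 1 = 1 := by
  unfold ιp
  rw [map_one, map_one]

/- iterate lemmas -/
private lemma it_add (g : Polynomial R ≃+* Polynomial R) (m : ℕ) (a b : Polynomial R) :
    (⇑g)^[m] (a + b) = (⇑g)^[m] a + (⇑g)^[m] b := by
  induction m with
  | zero => rfl
  | succ m ih =>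
    rw [Function.iterate_succ_apply', Function.iterate_succ_apply',
      Function.iterate_succ_apply', ih, map_add]

private lemma it_mul (g : Polynomial R ≃+* Polynomial R) (m : ℕ) (a b : Polynomial R) :
    (⇑g)^[m] (a * b) = (⇑g)^[m] a * (⇑g)^[m] b := by
  induction m with
  | zero => rfl
  | succ m ih =>
    rw [Function.iterate_succ_apply', Function.iterate_succ_apply',
      Function.iterate_succ_apply', ih, map_mul]

private lemma it_zero (g : Polynomial R ≃+* Polynomial R) (m : ℕ) : (⇑g)^[m] 0 = 0 := by
  induction m with
  | zero => rfl
  | succ m ih => rw [Function.iterate_succ_apply', ih, map_zero]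

private lemma it_sum (g : Polynomial R ≃+* Polynomial R) (m : ℕ) {ι : Type}
    (t : Finset ι) (F : ι → Polynomial R) :
    (⇑g)^[m] (∑ i ∈ t, F i) = ∑ i ∈ t, (⇑g)^[m] (F i) :=
  map_sum (⟨⟨(⇑g)^[m], it_zero g m⟩, it_add g m⟩ : Polynomial R →+ Polynomial R) F t

private lemma it_symm (g : Polynomial R ≃+* Polynomial R) (m : ℕ) (a : Polynomial R) :
    (⇑g.symm)^[m] ((⇑g)^[m] a) = a := by
  induction m with
  | zero => rfl
  | succ m ih =>
    rw [Function.iterate_succ_apply' (⇑g), Function.iterate_succ_apply (⇑g.symm),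
      g.symm_apply_apply, ih]

private lemma it_symm' (g : Polynomial R ≃+* Polynomial R) (m : ℕ) (a : Polynomial R) :
    (⇑g)^[m] ((⇑g.symm)^[m] a) = a := by
  have := it_symm g.symm m a
  rwa [RingEquiv.symm_symm] at this

/- basic InB lemmas -/
lemma InB_zero : O.InB (0 : A) := fun i => ⟨0, by rw [O.czero, map_zero]⟩

lemma InB_add {P Q : A} (hP : O.InB P) (hQ : O.InB Q) : O.InB (P + Q) := by
  intro i
  obtain ⟨p, hp⟩ := hP i
  obtain ⟨q, hq⟩ := hQ i
  exact ⟨p + q, by rw [O.coeff_add, hp, hq, map_add]⟩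

lemma InB_neg {P : A} (hP : O.InB P) : O.InB (-P) := by
  intro i
  obtain ⟨p, hp⟩ := hP i
  exact ⟨-p, by rw [O.cneg, hp, map_neg]⟩

lemma InB_sub {P Q : A} (hP : O.InB P) (hQ : O.InB Q) : O.InB (P - Q) := by
  rw [sub_eq_add_neg]
  exact O.InB_add hP (O.InB_neg hQ)

lemma InB_pmul (u : Polynomial R) {P : A} (hP : O.InB P) : O.InB (O.ιp u * P) := by
  intro i
  obtain ⟨p, hp⟩ := hP i
  exact ⟨u * p, by rw [O.coeff_pmul, hp, map_mul]⟩

lemma InB_one : O.InB (1 : A) := by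
  intro i
  refine ⟨if 0 = i then 1 else 0, ?_⟩
  have h1 : (1 : A) = O.ιp 1 * O.D ^ 0 := by rw [O.ιp_one, pow_zero, one_mul]
  rw [h1, O.cpsingle]
  split_ifs
  · rw [map_one]
  · rw [map_zero]

lemma InB_D : O.InB O.D := by
  intro i
  refine ⟨if 1 = i then 1 else 0, ?_⟩
  have h1 : O.D = O.ιp 1 * O.D ^ 1 := by rw [O.ιp_one, pow_one, one_mul]
  rw [h1, O.cpsingle]
  split_ifs
  · rw [map_one]
  · rw [map_zero]

/- D-multiplication -/
lemma Dmul_eq (P : A) (hP : O.InB P) (N : ℕ) (hN : ∀ i, N < i → O.coeff P i = 0) :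
    O.D * P = ∑ i ∈ Finset.range (N + 1),
      (O.ιp (O.σ (O.pcf P i)) * O.D ^ (i + 1) + O.ιp (O.δ (O.pcf P i)) * O.D ^ i) := by
  conv_lhs => rw [O.expandB P hP N hN]
  rw [Finset.mul_sum]
  refine Finset.sum_congr rfl fun i _ => ?_
  rw [← mul_assoc]
  simp only [ιp]
  rw [O.comm_rule, add_mul, mul_assoc, ← pow_succ']

lemma coeff_Dmul (P : A) (hP : O.InB P) (j : ℕ) :
    O.coeff (O.D * P) (j + 1)
      = algebraMap (Polynomial R) (QX R) (O.σ (O.pcf P j) + O.δ (O.pcf P (j + 1))) := by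
  obtain ⟨N, hN⟩ := O.coeff_bdd P
  rw [O.Dmul_eq P hP N hN, O.csum]
  have h1 : ∀ i,
      O.coeff (O.ιp (O.σ (O.pcf P i)) * O.D ^ (i + 1) + O.ιp (O.δ (O.pcf P i)) * O.D ^ i) (j + 1)
      = (if i = j then algebraMap (Polynomial R) (QX R) (O.σ (O.pcf P i)) else 0)
        + (if i = j + 1 then algebraMap (Polynomial R) (QX R) (O.δ (O.pcf P i)) else 0) := by
    intro i
    rw [O.coeff_add, O.cpsingle, O.cpsingle]
    congr 1
    simp only [add_left_inj]
  simp only [h1]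
  rw [Finset.sum_add_distrib, Finset.sum_ite_eq', Finset.sum_ite_eq', map_add]
  congr 1
  · split_ifs with h
    · rfl
    · rw [O.pcf_zero P hP (hN j (by simp at h; omega)), map_zero, map_zero]
  · split_ifs with h
    · rfl
    · rw [O.pcf_zero P hP (hN (j+1) (by simp at h; omega)), O.δ0, map_zero]

lemma coeff_Dmul0 (P : A) (hP : O.InB P) :
    O.coeff (O.D * P) 0 = algebraMap (Polynomial R) (QX R) (O.δ (O.pcf P 0)) := by
  obtain ⟨N, hN⟩ := O.coeff_bdd P
  rw [O.Dmul_eq P hP N hN, O.csum]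
  have h1 : ∀ i,
      O.coeff (O.ιp (O.σ (O.pcf P i)) * O.D ^ (i + 1) + O.ιp (O.δ (O.pcf P i)) * O.D ^ i) 0
      = (if i = 0 then algebraMap (Polynomial R) (QX R) (O.δ (O.pcf P i)) else 0) := by
    intro i
    rw [O.coeff_add, O.cpsingle, O.cpsingle, if_neg (by omega), zero_add]
  simp only [h1]
  rw [Finset.sum_ite_eq']
  rw [if_pos (by simp)]

lemma InB_Dmul {P : A} (hP : O.InB P) : O.InB (O.D * P) := by
  intro i
  cases i with
  | zero => exact ⟨_, O.coeff_Dmul0 P hP⟩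
  | succ j => exact ⟨_, O.coeff_Dmul P hP j⟩

lemma Dpow (P : A) (hP : O.InB P) (n : ℕ) (hn : ∀ j, n < j → O.coeff P j = 0) (e : ℕ) :
    O.InB (O.D ^ e * P) ∧ (∀ j, n + e < j → O.coeff (O.D ^ e * P) j = 0) ∧
      O.coeff (O.D ^ e * P) (n + e)
        = algebraMap (Polynomial R) (QX R) ((⇑O.σ)^[e] (O.pcf P n)) := by
  induction e with
  | zero =>
    rw [pow_zero, one_mul]
    exact ⟨hP, fun j hj => hn j (by omega), (O.pcf_spec P hP n).symm⟩
  | succ e ih =>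
    obtain ⟨hB, hbd, htop⟩ := ih
    have hDT : O.D ^ (e + 1) * P = O.D * (O.D ^ e * P) := by rw [pow_succ', mul_assoc]
    have hpt : O.pcf (O.D ^ e * P) (n + e) = (⇑O.σ)^[e] (O.pcf P n) := O.pcf_eq _ hB htop
    have hp0 : ∀ j, n + e < j → O.pcf (O.D ^ e * P) j = 0 :=
      fun j hj => O.pcf_zero _ hB (hbd j hj)
    refine ⟨?_, ?_, ?_⟩
    · rw [hDT]
      exact O.InB_Dmul hB
    · intro j hj
      obtain ⟨j', rfl⟩ : ∃ j', j = j' + 1 := ⟨j - 1, by omega⟩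
      rw [hDT, O.coeff_Dmul _ hB j', hp0 j' (by omega), hp0 (j' + 1) (by omega),
        map_zero, O.δ0, add_zero, map_zero]
    · have hne : n + (e + 1) = (n + e) + 1 := rfl
      rw [hDT, hne, O.coeff_Dmul _ hB (n + e), hpt, hp0 (n + e + 1) (by omega), O.δ0,
        add_zero, ← Function.iterate_succ_apply' (⇑O.σ) e (O.pcf P n)]

/- M lemmas -/
lemma mem_M_zero (L : A) (k : ℕ) : (0 : A) ∈ O.M L k :=
  ⟨⟨O.InB_zero, ⟨0, (zero_mul L).symm⟩⟩, O.ord_le 0 k fun j _ => O.czero j⟩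

lemma mem_M_add {L : A} {k : ℕ} {P Q : A} (hP : P ∈ O.M L k) (hQ : Q ∈ O.M L k) :
    P + Q ∈ O.M L k := by
  obtain ⟨⟨hPB, ⟨ZP, hZP⟩⟩, hPo⟩ := hP
  obtain ⟨⟨hQB, ⟨ZQ, hZQ⟩⟩, hQo⟩ := hQ
  refine ⟨⟨O.InB_add hPB hQB, ⟨ZP + ZQ, by rw [hZP, hZQ, add_mul]⟩⟩, ?_⟩
  refine O.ord_le _ k fun j hj => ?_
  rw [O.coeff_add, O.coeff_ord_lt P hPo hj, O.coeff_ord_lt Q hQo hj, add_zero]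

lemma mem_M_pmul {L : A} {k : ℕ} (u : Polynomial R) {P : A} (hP : P ∈ O.M L k) :
    O.ιp u * P ∈ O.M L k := by
  obtain ⟨⟨hPB, ⟨ZP, hZP⟩⟩, hPo⟩ := hP
  refine ⟨⟨O.InB_pmul u hPB, ⟨O.ιp u * ZP, by rw [hZP, mul_assoc]⟩⟩, ?_⟩
  refine O.ord_le _ k fun j hj => ?_
  rw [O.coeff_pmul, O.coeff_ord_lt P hPo hj, mul_zero]

lemma mem_M_Dmul {L : A} {k : ℕ} {P : A} (hP : P ∈ O.M L k) : O.D * P ∈ O.M L (k + 1) := by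
  obtain ⟨⟨hPB, ⟨ZP, hZP⟩⟩, hPo⟩ := hP
  refine ⟨⟨O.InB_Dmul hPB, ⟨O.D * ZP, by rw [hZP, mul_assoc]⟩⟩, ?_⟩
  refine O.ord_le _ (k + 1) fun j hj => ?_
  obtain ⟨j', rfl⟩ : ∃ j', j = j' + 1 := ⟨j - 1, by omega⟩
  rw [O.coeff_Dmul _ hPB j', O.pcf_zero P hPB (O.coeff_ord_lt P hPo (by omega)),
    O.pcf_zero P hPB (O.coeff_ord_lt P hPo (by omega)), map_zero, O.δ0, add_zero, map_zero]

lemma mem_M_Dmul' {L : A} {k : ℕ} {P : A} (hP : P ∈ O.M L k) (h0 : O.coeff P k = 0) :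
    O.D * P ∈ O.M L k := by
  obtain ⟨⟨hPB, ⟨ZP, hZP⟩⟩, hPo⟩ := hP
  refine ⟨⟨O.InB_Dmul hPB, ⟨O.D * ZP, by rw [hZP, mul_assoc]⟩⟩, ?_⟩
  refine O.ord_le _ k fun j hj => ?_
  obtain ⟨j', rfl⟩ : ∃ j', j = j' + 1 := ⟨j - 1, by omega⟩
  have hp1 : O.pcf P j' = 0 := by
    rcases Nat.lt_or_ge k j' with h | h
    · exact O.pcf_zero P hPB (O.coeff_ord_lt P hPo h)
    · have : j' = k := by omega
      subst this
      exact O.pcf_zero P hPB h0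
  rw [O.coeff_Dmul _ hPB j', hp1,
    O.pcf_zero P hPB (O.coeff_ord_lt P hPo (by omega)), map_zero, O.δ0, add_zero, map_zero]

lemma mem_M_sum {L : A} {k : ℕ} {ι : Type} (t : Finset ι) (F : ι → A)
    (h : ∀ i ∈ t, F i ∈ O.M L k) : (∑ i ∈ t, F i) ∈ O.M L k :=
  Finset.sum_induction F (· ∈ O.M L k) (fun _ _ ha hb => O.mem_M_add ha hb)
    (O.mem_M_zero L k) h

/- Icoeff lemmas -/
lemma I_zero (L : A) (k : ℕ) : (0 : Polynomial R) ∈ O.Icoeff L k :=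
  ⟨0, O.mem_M_zero L k, by rw [O.czero, map_zero]⟩

lemma I_add {L : A} {k : ℕ} {f g : Polynomial R} (hf : f ∈ O.Icoeff L k)
    (hg : g ∈ O.Icoeff L k) : f + g ∈ O.Icoeff L k := by
  obtain ⟨P, hPM, hPc⟩ := hf
  obtain ⟨Q, hQM, hQc⟩ := hg
  exact ⟨P + Q, O.mem_M_add hPM hQM, by rw [O.coeff_add, hPc, hQc, map_add]⟩

lemma I_pmul {L : A} {k : ℕ} (u : Polynomial R) {f : Polynomial R}
    (hf : f ∈ O.Icoeff L k) : u * f ∈ O.Icoeff L k := by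
  obtain ⟨P, hPM, hPc⟩ := hf
  exact ⟨O.ιp u * P, O.mem_M_pmul u hPM, by rw [O.coeff_pmul, hPc, map_mul]⟩

lemma I_sum {L : A} {k : ℕ} {ι : Type} (t : Finset ι) (F : ι → Polynomial R)
    (h : ∀ i ∈ t, F i ∈ O.Icoeff L k) : (∑ i ∈ t, F i) ∈ O.Icoeff L k :=
  Finset.sum_induction F (· ∈ O.Icoeff L k) (fun _ _ ha hb => O.I_add ha hb)
    (O.I_zero L k) h

lemma I_shift {L : A} {k : ℕ} {f : Polynomial R} (hf : f ∈ O.Icoeff L k) :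
    O.σ f ∈ O.Icoeff L (k + 1) := by
  obtain ⟨P, hPM, hPc⟩ := hf
  have hPB : O.InB P := hPM.1.1
  refine ⟨O.D * P, O.mem_M_Dmul hPM, ?_⟩
  rw [O.coeff_Dmul P hPB k, O.pcf_eq P hPB hPc,
    O.pcf_zero P hPB (O.coeff_ord_lt P hPM.2 (by omega)), O.δ0, add_zero]

/- generic finite-representation combinators -/
private lemma finrep_zero {α : Type} (pred : α → Prop) (val : α → A) :
    ∃ (n : ℕ) (d : Fin n → α), (∀ i, pred (d i)) ∧ (0 : A) = ∑ i, val (d i) :=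
  ⟨0, Fin.elim0, fun i => i.elim0, by simp⟩

private lemma finrep_add {α : Type} (pred : α → Prop) (val : α → A) {P Q : A}
    (hP : ∃ (n : ℕ) (d : Fin n → α), (∀ i, pred (d i)) ∧ P = ∑ i, val (d i))
    (hQ : ∃ (n : ℕ) (d : Fin n → α), (∀ i, pred (d i)) ∧ Q = ∑ i, val (d i)) :
    ∃ (n : ℕ) (d : Fin n → α), (∀ i, pred (d i)) ∧ P + Q = ∑ i, val (d i) := by
  obtain ⟨n, d, hd, rfl⟩ := hP
  obtain ⟨n', d', hd', rfl⟩ := hQ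
  refine ⟨n + n', Fin.append d d', ?_, ?_⟩
  · intro i
    refine Fin.addCases (fun j => ?_) (fun j => ?_) i
    · rw [Fin.append_left]
      exact hd j
    · rw [Fin.append_right]
      exact hd' j
  · rw [Fin.sum_univ_add]
    congr 1
    · exact Finset.sum_congr rfl fun j _ => by rw [Fin.append_left]
    · exact Finset.sum_congr rfl fun j _ => by rw [Fin.append_right]

private lemma finrep_sum {α ι : Type} (pred : α → Prop) (val : α → A)
    (t : Finset ι) (F : ι → A)
    (h : ∀ i ∈ t, ∃ (n : ℕ) (d : Fin n → α), (∀ i', pred (d i')) ∧ F i = ∑ i', val (d i')) :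
    ∃ (n : ℕ) (d : Fin n → α), (∀ i', pred (d i')) ∧ (∑ i ∈ t, F i) = ∑ i', val (d i') :=
  Finset.sum_induction F
    (fun Q => ∃ (n : ℕ) (d : Fin n → α), (∀ i', pred (d i')) ∧ Q = ∑ i', val (d i'))
    (fun _ _ ha hb => finrep_add pred val ha hb) (finrep_zero pred val) h

/- LIdeal lemmas -/
lemma LIdeal_mono {S T : Set A} (h : S ⊆ T) : O.LIdeal S ⊆ O.LIdeal T := by
  rintro P ⟨n, co, s, h1, h2, rfl⟩
  exact ⟨n, co, s, h1, fun i => h (h2 i), rfl⟩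

lemma mem_LIdeal_self {S : Set A} {P : A} (hP : P ∈ S) : P ∈ O.LIdeal S :=
  ⟨1, fun _ => 1, fun _ => P, fun _ => O.InB_one, fun _ => hP, by simp⟩

lemma InB_mul {P Q : A} (hP : O.InB P) (hQ : O.InB Q) : O.InB (P * Q) := by
  obtain ⟨N, hN⟩ := O.coeff_bdd P
  obtain ⟨NQ, hNQ⟩ := O.coeff_bdd Q
  rw [O.expandB P hP N hN, Finset.sum_mul]
  refine Finset.sum_induction _ O.InB (fun _ _ ha hb => O.InB_add ha hb) O.InB_zero
    fun i _ => ?_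
  rw [mul_assoc]
  exact O.InB_pmul _ (O.Dpow Q hQ NQ hNQ i).1

lemma LIdeal_iff {S : Set A} {P : A} :
    P ∈ O.LIdeal S ↔ ∃ (n : ℕ) (d : Fin n → A × A),
      (∀ i, O.InB (d i).1 ∧ (d i).2 ∈ S) ∧ P = ∑ i, (d i).1 * (d i).2 := by
  constructor
  · rintro ⟨n, co, s, h1, h2, rfl⟩
    exact ⟨n, fun i => (co i, s i), fun i => ⟨h1 i, h2 i⟩, rfl⟩
  · rintro ⟨n, d, h, rfl⟩
    exact ⟨n, fun i => (d i).1, fun i => (d i).2, fun i => (h i).1, fun i => (h i).2, rfl⟩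

lemma LIdeal_add {S : Set A} {P Q : A} (hP : P ∈ O.LIdeal S) (hQ : Q ∈ O.LIdeal S) :
    P + Q ∈ O.LIdeal S := by
  rw [O.LIdeal_iff] at hP hQ ⊢
  exact finrep_add (fun x : A × A => O.InB x.1 ∧ x.2 ∈ S) (fun x : A × A => x.1 * x.2) hP hQ

lemma LIdeal_mul {S : Set A} {c P : A} (hc : O.InB c) (hP : P ∈ O.LIdeal S) :
    c * P ∈ O.LIdeal S := by
  rw [O.LIdeal_iff] at hP ⊢
  obtain ⟨n, d, hd, rfl⟩ := hP
  refine ⟨n, fun i => (c * (d i).1, (d i).2), fun i => ⟨O.InB_mul hc (hd i).1, (hd i).2⟩, ?_⟩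
  rw [Finset.mul_sum]
  exact Finset.sum_congr rfl fun i _ => by rw [mul_assoc]

lemma LIdeal_trans {S S' : Set A} (h : S' ⊆ O.LIdeal S) : O.LIdeal S' ⊆ O.LIdeal S := by
  rintro P ⟨n, co, s, h1, h2, rfl⟩
  rw [O.LIdeal_iff]
  refine finrep_sum (fun x : A × A => O.InB x.1 ∧ x.2 ∈ S) (fun x => x.1 * x.2)
    Finset.univ (fun i => co i * s i) fun i _ => ?_
  have := O.LIdeal_mul (h1 i) (h (h2 i))
  rwa [O.LIdeal_iff] at this

/- representation with bounded D-exponents -/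
def Rep (L : A) (k m : ℕ) (P : A) : Prop :=
  ∃ (n : ℕ) (u : Fin n → Polynomial R) (e : Fin n → ℕ) (s : Fin n → A),
    (∀ i, e i ≤ m) ∧ (∀ i, s i ∈ O.M L k) ∧
    P = ∑ i, O.ιp (u i) * (O.D ^ e i * s i)

lemma Rep_iff {L : A} {k m : ℕ} {P : A} :
    O.Rep L k m P ↔ ∃ (n : ℕ) (d : Fin n → Polynomial R × ℕ × A),
      (∀ i, (d i).2.1 ≤ m ∧ (d i).2.2 ∈ O.M L k) ∧
      P = ∑ i, O.ιp (d i).1 * (O.D ^ (d i).2.1 * (d i).2.2) := by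
  constructor
  · rintro ⟨n, u, e, s, h1, h2, rfl⟩
    exact ⟨n, fun i => (u i, e i, s i), fun i => ⟨h1 i, h2 i⟩, rfl⟩
  · rintro ⟨n, d, h, rfl⟩
    exact ⟨n, fun i => (d i).1, fun i => (d i).2.1, fun i => (d i).2.2,
      fun i => (h i).1, fun i => (h i).2, rfl⟩

lemma Rep_mono {L : A} {k m m' : ℕ} (h : m ≤ m') {P : A} (hP : O.Rep L k m P) :
    O.Rep L k m' P := by
  obtain ⟨n, u, e, s, h1, h2, rfl⟩ := hP
  exact ⟨n, u, e, s, fun i => (h1 i).trans h, h2, rfl⟩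

lemma Rep_add {L : A} {k m : ℕ} {P Q : A} (hP : O.Rep L k m P) (hQ : O.Rep L k m Q) :
    O.Rep L k m (P + Q) :=
  O.Rep_iff.mpr (finrep_add (fun x : Polynomial R × ℕ × A => x.2.1 ≤ m ∧ x.2.2 ∈ O.M L k)
    (fun x : Polynomial R × ℕ × A => O.ιp x.1 * (O.D ^ x.2.1 * x.2.2))
    (O.Rep_iff.mp hP) (O.Rep_iff.mp hQ))

lemma Rep_zero {L : A} {k m : ℕ} : O.Rep L k m 0 :=
  O.Rep_iff.mpr (finrep_zero (fun x : Polynomial R × ℕ × A => x.2.1 ≤ m ∧ x.2.2 ∈ O.M L k)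
    (fun x : Polynomial R × ℕ × A => O.ιp x.1 * (O.D ^ x.2.1 * x.2.2)))

lemma Rep_sum {L : A} {k m : ℕ} {ι : Type} (t : Finset ι) (F : ι → A)
    (h : ∀ i ∈ t, O.Rep L k m (F i)) : O.Rep L k m (∑ i ∈ t, F i) :=
  Finset.sum_induction F (O.Rep L k m) (fun _ _ ha hb => O.Rep_add ha hb) O.Rep_zero h

lemma Rep_neg {L : A} {k m : ℕ} {P : A} (hP : O.Rep L k m P) : O.Rep L k m (-P) := by
  obtain ⟨n, u, e, s, h1, h2, rfl⟩ := hP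
  refine ⟨n, fun i => -(u i), e, s, h1, h2, ?_⟩
  rw [← Finset.sum_neg_distrib]
  exact Finset.sum_congr rfl fun i _ => by rw [O.ιp_neg, neg_mul]

lemma Rep_of_LIdeal {L : A} {k : ℕ} {P : A} (h : P ∈ O.LIdeal (O.M L k)) :
    ∃ m, O.Rep L k m P := by
  obtain ⟨n, co, s, hco, hsS, rfl⟩ := h
  choose N hN using fun i => O.coeff_bdd (co i)
  refine ⟨Finset.univ.sup N, ?_⟩
  have hrep : ∀ i, O.Rep L k (Finset.univ.sup N) (co i * s i) := by
    intro i
    refine ⟨N i + 1, fun j => O.pcf (co i) (j : ℕ), fun j => (j : ℕ), fun _ => s i,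
      ?_, fun _ => hsS i, ?_⟩
    · intro j
      exact (Nat.lt_succ_iff.mp j.isLt).trans (Finset.le_sup (Finset.mem_univ i))
    · conv_lhs => rw [O.expandB (co i) (hco i) (N i) (hN i)]
      rw [Finset.sum_mul, Finset.sum_range]
      exact Finset.sum_congr rfl fun j _ => by rw [mul_assoc]
  exact O.Rep_sum Finset.univ (fun i => co i * s i) fun i _ => hrep i

/- low-order operator representations -/
def LowRep (m : ℕ) (Q : A) : Prop :=
  ∃ (n : ℕ) (v : Fin n → Polynomial R) (e : Fin n → ℕ),
    (∀ i, e i < m) ∧ Q = ∑ i, O.ιp (v i) * O.D ^ e i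

lemma LowRep_iff {m : ℕ} {Q : A} :
    O.LowRep m Q ↔ ∃ (n : ℕ) (d : Fin n → Polynomial R × ℕ),
      (∀ i, (d i).2 < m) ∧ Q = ∑ i, O.ιp (d i).1 * O.D ^ (d i).2 := by
  constructor
  · rintro ⟨n, v, e, h1, rfl⟩
    exact ⟨n, fun i => (v i, e i), h1, rfl⟩
  · rintro ⟨n, d, h, rfl⟩
    exact ⟨n, fun i => (d i).1, fun i => (d i).2, h, rfl⟩

lemma LowRep_zero (m : ℕ) : O.LowRep m 0 :=
  O.LowRep_iff.mpr (finrep_zero (fun x : Polynomial R × ℕ => x.2 < m)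
    (fun x : Polynomial R × ℕ => O.ιp x.1 * O.D ^ x.2))

lemma LowRep_add {m : ℕ} {P Q : A} (hP : O.LowRep m P) (hQ : O.LowRep m Q) :
    O.LowRep m (P + Q) :=
  O.LowRep_iff.mpr (finrep_add (fun x : Polynomial R × ℕ => x.2 < m)
    (fun x : Polynomial R × ℕ => O.ιp x.1 * O.D ^ x.2)
    (O.LowRep_iff.mp hP) (O.LowRep_iff.mp hQ))

lemma LowRep_sum {m : ℕ} {ι : Type} (t : Finset ι) (F : ι → A)
    (h : ∀ i ∈ t, O.LowRep m (F i)) : O.LowRep m (∑ i ∈ t, F i) :=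
  Finset.sum_induction F (O.LowRep m) (fun _ _ ha hb => O.LowRep_add ha hb)
    (O.LowRep_zero m) h

lemma LowRep_single {m e : ℕ} (he : e < m) (v : Polynomial R) :
    O.LowRep m (O.ιp v * O.D ^ e) :=
  ⟨1, fun _ => v, fun _ => e, fun _ => he, by simp⟩

lemma LowRep_Dmul {m : ℕ} {E : A} (hE : O.LowRep m E) : O.LowRep (m + 1) (O.D * E) := by
  obtain ⟨n, v, e, h1, rfl⟩ := hE
  rw [Finset.mul_sum]
  refine O.LowRep_sum Finset.univ _ fun i _ => ?_
  have hcr : O.D * (O.ιp (v i) * O.D ^ e i)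
      = O.ιp (O.σ (v i)) * O.D ^ (e i + 1) + O.ιp (O.δ (v i)) * O.D ^ e i := by
    rw [← mul_assoc]
    simp only [ιp]
    rw [O.comm_rule, add_mul, mul_assoc, ← pow_succ']
  rw [hcr]
  exact O.LowRep_add (O.LowRep_single (by have := h1 i; omega) _)
    (O.LowRep_single (by have := h1 i; omega) _)

lemma Dpow_comm (m : ℕ) (wp : Polynomial R) :
    ∃ E : A, O.LowRep m E ∧
      O.D ^ m * O.ιp wp = O.ιp ((⇑O.σ)^[m] wp) * O.D ^ m + E := by
  induction m with
  | zero =>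
    refine ⟨0, O.LowRep_zero 0, ?_⟩
    rw [pow_zero, one_mul, mul_one, add_zero, Function.iterate_zero_apply]
  | succ m ih =>
    obtain ⟨E, hE, heq⟩ := ih
    refine ⟨O.ιp (O.δ ((⇑O.σ)^[m] wp)) * O.D ^ m + O.D * E,
      O.LowRep_add (O.LowRep_single (by omega) _) (O.LowRep_Dmul hE), ?_⟩
    rw [pow_succ', mul_assoc, heq, mul_add, ← mul_assoc]
    simp only [ιp]
    rw [O.comm_rule, add_mul, mul_assoc, ← pow_succ',
      ← Function.iterate_succ_apply' (⇑O.σ), add_assoc]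

/- the reduction step -/
lemma Rep_descend {L : A} {k : ℕ} (m : ℕ) (hm : 2 ≤ m) {P : A}
    (hP : O.Rep L k m P) (h0 : O.coeff P (k + m) = 0) : O.Rep L k (m - 1) P := by
  classical
  obtain ⟨n, u, e, s, hem, hsM, rfl⟩ := hP
  have hsB : ∀ i, O.InB (s i) := fun i => (hsM i).1.1
  have hsbd : ∀ i, ∀ j, k < j → O.coeff (s i) j = 0 :=
    fun i j hj => O.coeff_ord_lt (s i) (hsM i).2 hj
  have hDp := fun i => O.Dpow (s i) (hsB i) k (hsbd i) (e i)
  set T : Finset (Fin n) := Finset.univ.filter (fun i => e i = m) with hT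
  -- top coefficient cancellation
  have hcP : O.coeff (∑ i, O.ιp (u i) * (O.D ^ e i * s i)) (k + m)
      = ∑ i ∈ T, algebraMap (Polynomial R) (QX R) (u i * (⇑O.σ)^[m] (O.pcf (s i) k)) := by
    rw [O.csum, ← Finset.sum_filter_add_sum_filter_not Finset.univ (fun i => e i = m)]
    have hz : ∑ i ∈ Finset.univ.filter (fun i => ¬ e i = m),
        O.coeff (O.ιp (u i) * (O.D ^ e i * s i)) (k + m) = 0 := by
      refine Finset.sum_eq_zero fun i hi => ?_
      have hne : e i ≠ m := by
        have := Finset.mem_filter.mp hi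
        exact this.2
      rw [O.coeff_pmul, (hDp i).2.1 (k + m) (by have := hem i; omega), mul_zero]
    rw [hz, add_zero]
    refine Finset.sum_congr rfl fun i hi => ?_
    have hie : e i = m := (Finset.mem_filter.mp hi).2
    rw [O.coeff_pmul, map_mul]
    congr 1
    rw [show k + m = k + e i by rw [hie], (hDp i).2.2, hie]
  have hS : ∑ i ∈ T, u i * (⇑O.σ)^[m] (O.pcf (s i) k) = 0 := by
    apply alg_inj (R := R)
    rw [map_sum, map_zero, ← hcP, h0]
  set w : Fin n → Polynomial R := fun i => (⇑O.σ.symm)^[m] (u i) with hw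
  set Q : A := ∑ i ∈ T, O.ιp (w i) * s i with hQ
  have hQM : Q ∈ O.M L k := O.mem_M_sum T _ fun i _ => O.mem_M_pmul (w i) (hsM i)
  have hQk : O.coeff Q k = 0 := by
    rw [hQ, O.csum]
    have h1 : ∀ i ∈ T, O.coeff (O.ιp (w i) * s i) k
        = algebraMap (Polynomial R) (QX R) (w i * O.pcf (s i) k) := by
      intro i _
      rw [O.coeff_pmul, ← O.pcf_spec (s i) (hsB i) k, ← map_mul]
    rw [Finset.sum_congr rfl h1, ← map_sum]
    have h2 : ∑ i ∈ T, w i * O.pcf (s i) k = 0 := by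
      have h3 := congrArg ((⇑O.σ.symm)^[m]) hS
      rw [it_sum, it_zero] at h3
      rw [← h3]
      refine Finset.sum_congr rfl fun i _ => ?_
      rw [it_mul, it_symm]
    rw [h2, map_zero]
  have hDQ : O.D * Q ∈ O.M L k := O.mem_M_Dmul' hQM hQk
  -- commutation data
  choose E hElow hEeq using fun i => O.Dpow_comm m (w i)
  have hσw : ∀ i, (⇑O.σ)^[m] (w i) = u i := fun i => it_symm' O.σ m (u i)
  -- rewriting each top term
  have hterm : ∀ i ∈ T, O.ιp (u i) * (O.D ^ e i * s i)
      = O.D ^ m * (O.ιp (w i) * s i) - E i * s i := by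
    intro i hi
    have hie : e i = m := (Finset.mem_filter.mp hi).2
    have h4 : O.D ^ m * (O.ιp (w i) * s i) = (O.D ^ m * O.ιp (w i)) * s i := by
      rw [mul_assoc]
    rw [h4, hEeq i, hσw i, add_mul, mul_assoc, hie, add_sub_cancel_right]
  have hDm : O.D ^ m * Q = O.D ^ (m - 1) * (O.D * Q) := by
    rw [← mul_assoc, ← pow_succ]
    congr 2
    omega
  -- assemble
  have hPeq : ∑ i, O.ιp (u i) * (O.D ^ e i * s i)
      = (O.D ^ (m - 1) * (O.D * Q) + -(∑ i ∈ T, E i * s i))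
        + ∑ i ∈ Finset.univ.filter (fun i => ¬ e i = m), O.ιp (u i) * (O.D ^ e i * s i) := by
    rw [← Finset.sum_filter_add_sum_filter_not Finset.univ (fun i => e i = m)
      (fun i => O.ιp (u i) * (O.D ^ e i * s i))]
    congr 1
    rw [Finset.sum_congr rfl hterm, Finset.sum_sub_distrib, ← Finset.mul_sum, ← hQ, hDm,
      sub_eq_add_neg]
  rw [hPeq]
  refine O.Rep_add (O.Rep_add ?_ ?_) ?_
  · refine ⟨1, fun _ => 1, fun _ => m - 1, fun _ => O.D * Q, fun _ => le_rfl,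
      fun _ => hDQ, ?_⟩
    simp [O.ιp_one]
  · refine O.Rep_neg (O.Rep_sum T _ fun i _ => ?_)
    obtain ⟨nE, vE, eE, hdE, hEexp⟩ := hElow i
    refine ⟨nE, vE, eE, fun _ => s i, fun j => by have h5 := hdE j; omega,
      fun _ => hsM i, ?_⟩
    rw [hEexp, Finset.sum_mul]
    exact Finset.sum_congr rfl fun j _ => by rw [mul_assoc]
  · refine O.Rep_sum _ _ fun i hi => ?_
    have hne : e i ≠ m := (Finset.mem_filter.mp hi).2
    exact ⟨1, fun _ => u i, fun _ => e i, fun _ => s i,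
      fun _ => by show e i ≤ m - 1; have h5 := hem i; omega, fun _ => hsM i, by simp⟩

/- the base case -/
lemma Rep_base {L : A} {k : ℕ} {P : A} (hP : O.Rep L k 1 P) :
    ∃ g ∈ O.Icoeff L k, O.coeff P (k + 1)
      = algebraMap (Polynomial R) (QX R) (O.σ g) := by
  classical
  obtain ⟨n, u, e, s, hem, hsM, rfl⟩ := hP
  have hsB : ∀ i, O.InB (s i) := fun i => (hsM i).1.1
  have hsbd : ∀ i, ∀ j, k < j → O.coeff (s i) j = 0 :=
    fun i j hj => O.coeff_ord_lt (s i) (hsM i).2 hj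
  set T : Finset (Fin n) := Finset.univ.filter (fun i => e i = 1) with hT
  have hcP : O.coeff (∑ i, O.ιp (u i) * (O.D ^ e i * s i)) (k + 1)
      = ∑ i ∈ T, algebraMap (Polynomial R) (QX R) (u i * O.σ (O.pcf (s i) k)) := by
    rw [O.csum, ← Finset.sum_filter_add_sum_filter_not Finset.univ (fun i => e i = 1)]
    have hz : ∑ i ∈ Finset.univ.filter (fun i => ¬ e i = 1),
        O.coeff (O.ιp (u i) * (O.D ^ e i * s i)) (k + 1) = 0 := by
      refine Finset.sum_eq_zero fun i hi => ?_
      have hne : e i ≠ 1 := (Finset.mem_filter.mp hi).2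
      have he0 : e i = 0 := by have := hem i; omega
      rw [O.coeff_pmul, he0, pow_zero, one_mul, hsbd i (k + 1) (by omega), mul_zero]
    rw [hz, add_zero]
    refine Finset.sum_congr rfl fun i hi => ?_
    have hie : e i = 1 := (Finset.mem_filter.mp hi).2
    have hDp := O.Dpow (s i) (hsB i) k (hsbd i) (e i)
    rw [O.coeff_pmul, map_mul]
    congr 1
    rw [show k + 1 = k + e i by rw [hie], hDp.2.2, hie, Function.iterate_one]
  refine ⟨∑ i ∈ T, O.σ.symm (u i) * O.pcf (s i) k, ?_, ?_⟩
  · refine O.I_sum T _ fun i _ => ?_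
    exact O.I_pmul _ ⟨s i, hsM i, (O.pcf_spec (s i) (hsB i) k).symm⟩
  · rw [hcP, map_sum (O.σ : Polynomial R ≃+* Polynomial R), ← map_sum]
    refine congrArg _ (Finset.sum_congr rfl fun i _ => ?_)
    rw [map_mul, O.σ.apply_symm_apply]

lemma Rep_top {L : A} {k : ℕ} {P : A} (hord : O.ord P ≤ k + 1) :
    ∀ m, O.Rep L k m P → ∃ g ∈ O.Icoeff L k, O.coeff P (k + 1)
      = algebraMap (Polynomial R) (QX R) (O.σ g) := by
  intro m
  induction m with
  | zero => exact fun h => O.Rep_base (O.Rep_mono (by omega) h)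
  | succ m ih =>
    intro h
    rcases Nat.lt_or_ge m 1 with hm | hm
    · have hm0 : m = 0 := by omega
      subst hm0
      exact O.Rep_base h
    · have h0 : O.coeff P (k + (m + 1)) = 0 := O.coeff_ord_lt P hord (by omega)
      have hdesc := O.Rep_descend (m + 1) (by omega) h h0
      rw [show m + 1 - 1 = m by omega] at hdesc
      exact ih hdesc

end OreAlg

/-- for `k ≥ r`, the left ideal `R[x][∂]·M_k` equals
`R[x][∂]·M_{k+1}` if and only if `σ(I_k) = I_{k+1}`. -/
theorem ideal_stable_iff_coeff_shift {R : Type} [CommRing R] [IsDomain R]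
    [IsPrincipalIdealRing R] {A : Type} [Ring A] (O : OreAlg R A)
    (L : A) (hL : L ≠ 0) (hLB : O.InB L)
    (r : ℕ) (hr : O.ord L = r) (hrpos : 0 < r)
    (k : ℕ) (hk : r ≤ k) :
    O.LIdeal (O.M L k) = O.LIdeal (O.M L (k + 1)) ↔
      (⇑O.σ) '' O.Icoeff L k = O.Icoeff L (k + 1) := by
  constructor
  · intro h
    apply Set.Subset.antisymm
    · rintro f ⟨g, hgI, rfl⟩
      exact O.I_shift hgI
    · intro f hf
      obtain ⟨P, hPM, hPc⟩ := hf
      have hPI : P ∈ O.LIdeal (O.M L (k + 1)) := O.mem_LIdeal_self hPM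
      rw [← h] at hPI
      obtain ⟨m, hRep⟩ := O.Rep_of_LIdeal hPI
      obtain ⟨g, hgI, hgc⟩ := O.Rep_top hPM.2 m hRep
      exact ⟨g, hgI, (OreAlg.alg_inj (hPc.symm.trans hgc)).symm⟩
  · intro h
    apply Set.Subset.antisymm
    · exact O.LIdeal_mono fun P hP => ⟨hP.1, hP.2.trans (by omega)⟩
    · refine O.LIdeal_trans fun P hP => ?_
      have hPB : O.InB P := hP.1.1
      have hf : O.coeff P (k + 1)
          = algebraMap (Polynomial R) (QX R) (O.pcf P (k + 1)) :=
        (O.pcf_spec P hPB (k + 1)).symm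
      have hfI : O.pcf P (k + 1) ∈ O.Icoeff L (k + 1) := ⟨P, hP, hf⟩
      rw [← h] at hfI
      obtain ⟨g, hgI, hgf⟩ := hfI
      obtain ⟨Q, hQM, hQc⟩ := hgI
      have hQB : O.InB Q := hQM.1.1
      have hsub : P - O.D * Q ∈ O.M L k := by
        obtain ⟨⟨_, ⟨Z1, hZ1⟩⟩, hPo⟩ := hP
        obtain ⟨⟨_, ⟨Z2, hZ2⟩⟩, hQo⟩ := hQM
        refine ⟨⟨O.InB_sub hPB (O.InB_Dmul hQB),
          ⟨Z1 - O.D * Z2, by rw [hZ1, hZ2, sub_mul, mul_assoc]⟩⟩, ?_⟩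
        refine O.ord_le _ k fun j hj => ?_
        rw [O.csub]
        obtain ⟨j', rfl⟩ : ∃ j', j = j' + 1 := ⟨j - 1, by omega⟩
        rw [O.coeff_Dmul Q hQB j']
        rcases Nat.lt_or_ge (k + 1) (j' + 1) with hlt | hge
        · rw [O.coeff_ord_lt P hPo hlt,
            O.pcf_zero Q hQB (O.coeff_ord_lt Q hQo (by omega)),
            O.pcf_zero Q hQB (O.coeff_ord_lt Q hQo (by omega)),
            map_zero, O.δ0, add_zero, map_zero, sub_zero]
        · have hj1 : j' = k := by omega
          subst hj1
          rw [O.pcf_eq Q hQB hQc,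
            O.pcf_zero Q hQB (O.coeff_ord_lt Q hQo (by omega)), O.δ0, add_zero,
            hf, ← hgf, sub_self]
      have hPrw : P = (P - O.D * Q) + O.D * Q := by abel
      rw [hPrw]
      exact O.LIdeal_add (O.mem_LIdeal_self hsub)
        (O.LIdeal_mul O.InB_D (O.mem_LIdeal_self hQM))
end
end

section
/- If P and Q in R[x][∂] are both R-primitive, then their (noncommutative Ore) product PQ is R-primitive. -/
open Polynomial

noncomputable section

/-- Auxiliary: iterated coefficient sequences of `D^i * Q`. -/
def qIter {R : Type} [CommRing R] (σ δ : Polynomial R → Polynomial R)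
    (qc : ℕ → Polynomial R) : ℕ → ℕ → Polynomial R
  | 0, n => qc n
  | (i+1), 0 => δ (qIter σ δ qc i 0)
  | (i+1), (n+1) => σ (qIter σ δ qc i n) + δ (qIter σ δ qc i (n+1))

lemma qIter_zero {R : Type} [CommRing R] (σ δ : Polynomial R → Polynomial R)
    (qc : ℕ → Polynomial R) (n : ℕ) : qIter σ δ qc 0 n = qc n := rfl

lemma qIter_succ_zero {R : Type} [CommRing R] (σ δ : Polynomial R → Polynomial R)
    (qc : ℕ → Polynomial R) (i : ℕ) :
    qIter σ δ qc (i+1) 0 = δ (qIter σ δ qc i 0) := rfl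

lemma qIter_succ_succ {R : Type} [CommRing R] (σ δ : Polynomial R → Polynomial R)
    (qc : ℕ → Polynomial R) (i n : ℕ) :
    qIter σ δ qc (i+1) (n+1) = σ (qIter σ δ qc i n) + δ (qIter σ δ qc i (n+1)) := rfl

/-- Auxiliary: shift a sequence of polynomials by one, inserting `0`. -/
def shiftSeq {R : Type} [CommRing R] (f : ℕ → Polynomial R) : ℕ → Polynomial R
  | 0 => 0
  | (n+1) => f n

lemma shiftSeq_zero {R : Type} [CommRing R] (f : ℕ → Polynomial R) :
    shiftSeq f 0 = 0 := rfl

lemma shiftSeq_succ {R : Type} [CommRing R] (f : ℕ → Polynomial R) (n : ℕ) :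
    shiftSeq f (n+1) = f n := rfl

/-- Gauss's lemma for Ore operators: if `P` and `Q` in `R[x][∂]`
are `R`-primitive (no non-unit of `R` divides all their coefficients), then so is
their noncommutative Ore product `P·Q`. -/
theorem ore_gauss_lemma {R : Type} [CommRing R] [IsDomain R]
    [IsPrincipalIdealRing R] {A : Type} [Ring A] (O : OreAlg R A)
    (P Q : A) (pc qc rc : ℕ → Polynomial R)
    (hP : ∀ i, O.coeff P i = algebraMap (Polynomial R) (QX R) (pc i))
    (hQ : ∀ i, O.coeff Q i = algebraMap (Polynomial R) (QX R) (qc i))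
    (hPQ : ∀ i, O.coeff (P * Q) i = algebraMap (Polynomial R) (QX R) (rc i))
    (hPprim : ∀ s : R, (∀ i, C s ∣ pc i) → IsUnit s)
    (hQprim : ∀ s : R, (∀ i, C s ∣ qc i) → IsUnit s) :
    ∀ s : R, (∀ i, C s ∣ rc i) → IsUnit s := by
  classical
  intro s hs
  by_contra hsu
  have hφinj : Function.Injective (algebraMap (Polynomial R) (QX R)) :=
    IsFractionRing.injective _ _
  -- basic facts
  have hδ0 : O.δ 0 = 0 := by
    have h := O.δ_add 0 0
    rw [add_zero] at h
    exact (left_eq_add.mp h)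
  have coeff0 : ∀ j, O.coeff (0 : A) j = 0 := by
    intro j
    have h := O.coeff_add 0 0 j
    rw [add_zero] at h
    exact (left_eq_add.mp h)
  have coeff_sum : ∀ (F : Finset ℕ) (f : ℕ → A) (j : ℕ),
      O.coeff (∑ i ∈ F, f i) j = ∑ i ∈ F, O.coeff (f i) j := by
    intro F
    induction F using Finset.induction with
    | empty => intro f j; simpa using coeff0 j
    | insert _ _ hnm ih =>
      intro f j
      rw [Finset.sum_insert hnm, Finset.sum_insert hnm, O.coeff_add, ih]
  -- representation lemma
  have rep : ∀ (X : A) (c : ℕ → Polynomial R) (N : ℕ),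
      (∀ i, N < i → c i = 0) → (∀ j, O.coeff X j = algebraMap (Polynomial R) (QX R) (c j)) →
      X = ∑ i ∈ Finset.range (N+1),
        O.ι (algebraMap (Polynomial R) (QX R) (c i)) * O.D ^ i := by
    intro X c N hc hX
    apply O.coeff_inj
    intro j
    exact (hX j).trans
      (O.coeff_mk N (fun i => algebraMap (Polynomial R) (QX R) (c i))
        (fun i hi => by rw [hc i hi, map_zero]) j).symm
  -- bounds
  obtain ⟨NP, hNP⟩ := O.coeff_bdd P
  obtain ⟨NQ, hNQ⟩ := O.coeff_bdd Q
  have hpc0 : ∀ i, NP < i → pc i = 0 := fun i hi =>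
    hφinj (by rw [← hP i, hNP i hi, map_zero])
  have hqc0 : ∀ i, NQ < i → qc i = 0 := fun i hi =>
    hφinj (by rw [← hQ i, hNQ i hi, map_zero])
  -- main induction: coefficients of D^i * Q
  have hq : ∀ i : ℕ, (∀ n, NQ + i < n → qIter (⇑O.σ) O.δ qc i n = 0) ∧
      ∀ n, O.coeff (O.D ^ i * Q) n
        = algebraMap (Polynomial R) (QX R) (qIter (⇑O.σ) O.δ qc i n) := by
    intro i
    induction i with
    | zero =>
      constructor
      · intro n hn
        rw [qIter_zero]
        exact hqc0 n (by omega)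
      · intro n
        rw [pow_zero, one_mul, qIter_zero]
        exact hQ n
    | succ i ih =>
      obtain ⟨ihb, ihc⟩ := ih
      have hb : ∀ n, NQ + (i+1) < n → qIter (⇑O.σ) O.δ qc (i+1) n = 0 := by
        intro n hn
        match n, hn with
        | (n+1), hn =>
          rw [qIter_succ_succ, ihb n (by omega), ihb (n+1) (by omega), map_zero, hδ0,
            add_zero]
      have hXeq : O.D ^ i * Q = ∑ n ∈ Finset.range (NQ + i + 1),
          O.ι (algebraMap (Polynomial R) (QX R) (qIter (⇑O.σ) O.δ qc i n)) * O.D ^ n :=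
        rep _ _ _ (fun n hn => ihb n (by omega)) ihc
      have hDX : O.D ^ (i+1) * Q
          = (∑ n ∈ Finset.range (NQ + i + 1),
              O.ι (algebraMap (Polynomial R) (QX R) (O.σ (qIter (⇑O.σ) O.δ qc i n)))
                * O.D ^ (n+1))
            + ∑ n ∈ Finset.range (NQ + i + 1),
              O.ι (algebraMap (Polynomial R) (QX R) (O.δ (qIter (⇑O.σ) O.δ qc i n)))
                * O.D ^ n := by
        rw [pow_succ', mul_assoc, hXeq, Finset.mul_sum, ← Finset.sum_add_distrib]
        apply Finset.sum_congr rfl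
        intro n _
        rw [← mul_assoc, O.comm_rule (qIter (⇑O.σ) O.δ qc i n), add_mul, mul_assoc,
          ← pow_succ']
      -- coefficients of the first (shifted) sum
      have hS1rw : (∑ n ∈ Finset.range (NQ + i + 1 + 1),
            O.ι (algebraMap (Polynomial R) (QX R)
              (shiftSeq (fun m => O.σ (qIter (⇑O.σ) O.δ qc i m)) n)) * O.D ^ n)
          = ∑ n ∈ Finset.range (NQ + i + 1),
            O.ι (algebraMap (Polynomial R) (QX R) (O.σ (qIter (⇑O.σ) O.δ qc i n)))
              * O.D ^ (n+1) := by
        rw [Finset.sum_range_succ']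
        simp [shiftSeq_zero, shiftSeq_succ]
      have hS1 : ∀ j, O.coeff (∑ n ∈ Finset.range (NQ + i + 1),
            O.ι (algebraMap (Polynomial R) (QX R) (O.σ (qIter (⇑O.σ) O.δ qc i n)))
              * O.D ^ (n+1)) j
          = algebraMap (Polynomial R) (QX R)
              (shiftSeq (fun m => O.σ (qIter (⇑O.σ) O.δ qc i m)) j) := by
        intro j
        rw [← hS1rw]
        exact O.coeff_mk (NQ + i + 1)
          (fun n => algebraMap (Polynomial R) (QX R)
            (shiftSeq (fun m => O.σ (qIter (⇑O.σ) O.δ qc i m)) n))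
          (fun n hn => by
            match n, hn with
            | (n+1), hn =>
              rw [shiftSeq_succ, ihb n (by omega), map_zero, map_zero]) j
      have hS2 : ∀ j, O.coeff (∑ n ∈ Finset.range (NQ + i + 1),
            O.ι (algebraMap (Polynomial R) (QX R) (O.δ (qIter (⇑O.σ) O.δ qc i n)))
              * O.D ^ n) j
          = algebraMap (Polynomial R) (QX R) (O.δ (qIter (⇑O.σ) O.δ qc i j)) := by
        intro j
        exact O.coeff_mk (NQ + i)
          (fun n => algebraMap (Polynomial R) (QX R) (O.δ (qIter (⇑O.σ) O.δ qc i n)))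
          (fun n hn => by rw [ihb n (by omega), hδ0, map_zero]) j
      refine ⟨hb, ?_⟩
      intro n
      rw [hDX, O.coeff_add, hS1 n, hS2 n, ← map_add]
      congr 1
      match n with
      | 0 =>
        rw [qIter_succ_zero, shiftSeq_zero, zero_add]
      | (n+1) =>
        rw [qIter_succ_succ, shiftSeq_succ]
  -- coefficients of P * Q
  have hPrep : P = ∑ i ∈ Finset.range (NP+1),
      O.ι (algebraMap (Polynomial R) (QX R) (pc i)) * O.D ^ i := rep P pc NP hpc0 hP
  have hrc : ∀ n, rc n = ∑ i ∈ Finset.range (NP+1), pc i * qIter (⇑O.σ) O.δ qc i n := by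
    intro n
    apply hφinj
    have hcoe : O.coeff (P * Q) n = ∑ i ∈ Finset.range (NP+1),
        algebraMap (Polynomial R) (QX R) (pc i * qIter (⇑O.σ) O.δ qc i n) := by
      conv_lhs => rw [hPrep]
      rw [Finset.sum_mul, coeff_sum]
      apply Finset.sum_congr rfl
      intro i _
      rw [mul_assoc, O.coeff_smul, (hq i).2 n, ← map_mul]
    rw [← hPQ n, hcoe, map_sum]
  -- the key contradiction
  have key : ∀ t : R, ¬ IsUnit t →
      (∀ a b : Polynomial R, C t ∣ a * b → C t ∣ a ∨ C t ∣ b) →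
      (∀ n, C t ∣ rc n) → False := by
    intro t htu hsplit htr
    have hσd : ∀ f : Polynomial R, C t ∣ f → C t ∣ O.σ f := by
      rintro f ⟨g, rfl⟩
      exact ⟨O.σ g, by rw [map_mul, O.σ_fix]⟩
    have hσsymmC : O.σ.symm (C t) = C t := O.σ.symm_apply_eq.mpr (O.σ_fix t).symm
    have hσd' : ∀ f : Polynomial R, C t ∣ O.σ f → C t ∣ f := by
      rintro f ⟨g, hg⟩
      refine ⟨O.σ.symm g, ?_⟩
      have := congrArg (⇑O.σ.symm) hg
      rwa [RingEquiv.symm_apply_apply, map_mul, hσsymmC] at this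
    have hδd : ∀ f : Polynomial R, C t ∣ f → C t ∣ O.δ f := by
      rintro f ⟨g, rfl⟩
      exact ⟨O.δ g, O.δ_linear t g⟩
    -- maximal non-divisible indices
    have hpex : ∃ i, ¬ C t ∣ pc i := by
      by_contra h
      push_neg at h
      exact htu (hPprim t h)
    have hqex : ∃ j, ¬ C t ∣ qc j := by
      by_contra h
      push_neg at h
      exact htu (hQprim t h)
    obtain ⟨iw, hiw⟩ := hpex
    obtain ⟨jw, hjw⟩ := hqex
    have hiwle : iw ≤ NP := by
      by_contra h
      exact hiw (hpc0 iw (by omega) ▸ dvd_zero _)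
    have hjwle : jw ≤ NQ := by
      by_contra h
      exact hjw (hqc0 jw (by omega) ▸ dvd_zero _)
    set i0 := Nat.findGreatest (fun i => ¬ C t ∣ pc i) NP with hi0def
    set j0 := Nat.findGreatest (fun j => ¬ C t ∣ qc j) NQ with hj0def
    have hi0 : ¬ C t ∣ pc i0 := Nat.findGreatest_spec (P := fun i => ¬ C t ∣ pc i) hiwle hiw
    have hj0 : ¬ C t ∣ qc j0 := Nat.findGreatest_spec (P := fun j => ¬ C t ∣ qc j) hjwle hjw
    have hi0le : i0 ≤ NP := Nat.findGreatest_le NP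
    have hi0gt : ∀ i, i0 < i → C t ∣ pc i := by
      intro i h
      by_cases hle : i ≤ NP
      · exact not_not.mp (Nat.findGreatest_is_greatest (P := fun i => ¬ C t ∣ pc i) h hle)
      · rw [hpc0 i (by omega)]; exact dvd_zero _
    have hj0gt : ∀ j, j0 < j → C t ∣ qc j := by
      intro j h
      by_cases hle : j ≤ NQ
      · exact not_not.mp (Nat.findGreatest_is_greatest (P := fun j => ¬ C t ∣ qc j) h hle)
      · rw [hqc0 j (by omega)]; exact dvd_zero _
    -- divisibility of the qIter coefficients
    have hmain : ∀ i : ℕ, (∀ n, i + j0 < n → C t ∣ qIter (⇑O.σ) O.δ qc i n) ∧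
        ∃ g : Polynomial R,
          qIter (⇑O.σ) O.δ qc i (i + j0) = (⇑O.σ)^[i] (qc j0) + C t * g := by
      intro i
      induction i with
      | zero =>
        refine ⟨fun n hn => hj0gt n (by omega), 0, ?_⟩
        simp [qIter_zero]
      | succ i ih =>
        obtain ⟨ih1, g, hg⟩ := ih
        have h1 : ∀ n, (i+1) + j0 < n → C t ∣ qIter (⇑O.σ) O.δ qc (i+1) n := by
          intro n hn
          match n, hn with
          | (n+1), hn =>
            rw [qIter_succ_succ]
            exact dvd_add (hσd _ (ih1 n (by omega))) (hδd _ (ih1 (n+1) (by omega)))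
        refine ⟨h1, ?_⟩
        have hidx : (i+1) + j0 = (i + j0) + 1 := by omega
        rw [hidx, qIter_succ_succ]
        obtain ⟨g2, hg2⟩ := hδd _ (ih1 (i + j0 + 1) (by omega))
        refine ⟨O.σ g + g2, ?_⟩
        rw [hg, map_add, map_mul, O.σ_fix, hg2, Function.iterate_succ_apply']
        ring
    -- assemble the contradiction at coefficient i0 + j0
    obtain ⟨g, hgq⟩ := (hmain i0).2
    have hmem : i0 ∈ Finset.range (NP+1) := Finset.mem_range.mpr (by omega)
    have hrest : C t ∣ ∑ i ∈ (Finset.range (NP+1)).erase i0,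
        pc i * qIter (⇑O.σ) O.δ qc i (i0 + j0) := by
      apply Finset.dvd_sum
      intro i hi
      rcases lt_or_gt_of_ne (Finset.ne_of_mem_erase hi) with h | h
      · exact Dvd.dvd.mul_left ((hmain i).1 (i0 + j0) (by omega)) _
      · exact Dvd.dvd.mul_right (hi0gt i h) _
    have hx : C t ∣ pc i0 * qIter (⇑O.σ) O.δ qc i0 (i0 + j0)
        + ∑ i ∈ (Finset.range (NP+1)).erase i0,
            pc i * qIter (⇑O.σ) O.δ qc i (i0 + j0) := by
      rw [Finset.add_sum_erase (Finset.range (NP+1)) (fun i => pc i * qIter (⇑O.σ) O.δ qc i (i0 + j0)) hmem, ← hrc (i0 + j0)]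
      exact htr _
    have hterm : C t ∣ pc i0 * qIter (⇑O.σ) O.δ qc i0 (i0 + j0) := by
      have := dvd_sub hx hrest
      simpa using this
    rw [hgq, mul_add] at hterm
    have h2 : C t ∣ pc i0 * (C t * g) := ⟨pc i0 * g, by ring⟩
    have h3 : C t ∣ pc i0 * (⇑O.σ)^[i0] (qc j0) := by
      have := dvd_sub hterm h2
      simpa using this
    rcases hsplit _ _ h3 with h | h
    · exact hi0 h
    · have hiter : ∀ (k : ℕ) (f : Polynomial R), C t ∣ (⇑O.σ)^[k] f → C t ∣ f := by
        intro k
        induction k with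
        | zero => intro f h; simpa using h
        | succ k ih =>
          intro f h
          rw [Function.iterate_succ_apply] at h
          exact hσd' f (ih _ h)
      exact hj0 (hiter i0 _ h)
  -- conclude, using a prime (or zero) divisor of s
  by_cases hs0 : s = 0
  · subst hs0
    refine key 0 not_isUnit_zero ?_ hs
    intro a b hab
    rw [map_zero, zero_dvd_iff] at hab
    rcases mul_eq_zero.mp hab with h | h
    · exact Or.inl (by rw [h, map_zero])
    · exact Or.inr (by rw [h, map_zero])
  · obtain ⟨p, hpi, hpd⟩ := WfDvdMonoid.exists_irreducible_factor hsu hs0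
    have hp : Prime p := (irreducible_iff_prime).mp hpi
    refine key p hp.not_unit ?_ ?_
    · intro a b hab
      exact (Polynomial.prime_C_iff.mpr hp).2.2 a b hab
    · intro n
      exact dvd_trans (map_dvd Polynomial.C hpd) (hs n)
end
end
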